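/- arXiv:2301.13327 — 3 statements merged into one kernel-verified Lean document; each statement's English description precedes it below -/
import Mathlib

section
/- If x* is a weak Pareto minimum of (f_1,...,f_r) on X, and f_i(x*) > 0 for all i, then with the weights w_i := (f_i(x*))^{-1} / (∑_{j=1}^r (f_j(x*))^{-1}), which are positive and sum to 1, the point x* minimizes the weighted Chebyshev function max_i w_i f_i(x) over X. -/
/-- If `xs` is a weak Pareto minimum of `(f 1,...,f r)` on a nonempty `X`, with
`f i xs > 0` for all `i`, then with weights `w i = (f i xs)⁻¹ / ∑ j, (f j xs)⁻¹`,
which are positive and sum to 1, `xs` minimizes the weighted Chebyshev function. -/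
theorem weak_pareto_is_chebyshev_min {X : Type*} [Nonempty X] {r : ℕ} (hr : 0 < r)
    (f : Fin r → X → ℝ) (hf : ∀ i (x : X), 0 < f i x) (xs : X)
    (hpar : ¬ ∃ x : X, ∀ i, f i x < f i xs)
    (w : Fin r → ℝ)
    (hw : ∀ i, w i = (f i xs)⁻¹ / ∑ j, (f j xs)⁻¹) :
    (∀ i, 0 < w i) ∧ (∑ i, w i = 1) ∧
    ∀ x : X,
      (Finset.univ.sup' (Finset.univ_nonempty_iff.mpr (Fin.pos_iff_nonempty.mp hr))
        fun i => w i * f i xs) ≤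
      Finset.univ.sup' (Finset.univ_nonempty_iff.mpr (Fin.pos_iff_nonempty.mp hr))
        fun i => w i * f i x := by
  have hne : (Finset.univ : Finset (Fin r)).Nonempty :=
    Finset.univ_nonempty_iff.mpr (Fin.pos_iff_nonempty.mp hr)
  set S : ℝ := ∑ j, (f j xs)⁻¹ with hS
  have hSpos : 0 < S :=
    Finset.sum_pos (fun j _ => inv_pos.mpr (hf j xs)) hne
  have hwpos : ∀ i, 0 < w i := fun i => by
    rw [hw i]; exact div_pos (inv_pos.mpr (hf i xs)) hSpos
  have hwconst : ∀ i, w i * f i xs = S⁻¹ := fun i => by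
    rw [hw i]
    field_simp
    exact div_self (hf i xs).ne'
  refine ⟨hwpos, ?_, ?_⟩
  · rw [show (∑ i, w i) = (∑ i, (f i xs)⁻¹) / S by
      rw [Finset.sum_div]; exact Finset.sum_congr rfl fun i _ => hw i]
    exact div_self hSpos.ne'
  · intro x
    have hL : (Finset.univ.sup' hne fun i => w i * f i xs) = S⁻¹ := by
      apply le_antisymm
      · exact Finset.sup'_le _ _ fun i _ => (hwconst i).le
      · exact le_trans (hwconst (hne.choose)).ge
          (Finset.le_sup' (f := fun i => w i * f i xs) (Finset.mem_univ hne.choose))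
    rw [hL]
    push_neg at hpar
    obtain ⟨i, hi⟩ := hpar x
    calc S⁻¹ = w i * f i xs := (hwconst i).symm
      _ ≤ w i * f i x := by
        exact mul_le_mul_of_nonneg_left hi (hwpos i).le
      _ ≤ _ := Finset.le_sup' (f := fun i => w i * f i x) (Finset.mem_univ i)
end

section
/- A point x* ∈ X is a weak Pareto minimum of two nonnegative objectives (f_1, f_2) on X if and only if there exists w ∈ (0,1) such that x* minimizes max{w f_1(x), (1−w) f_2(x)} over X. -/
/-- A point `xs` is a weak Pareto minimum of two positive objectives `(f1, f2)` on `X`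
iff there exists `w ∈ (0,1)` such that `xs` minimizes `max (w * f1 x) ((1-w) * f2 x)`. -/
theorem weak_pareto_iff_chebyshev_two_obj {X : Type*} [Nonempty X]
    (f1 f2 : X → ℝ) (h1 : ∀ x, 0 < f1 x) (h2 : ∀ x, 0 < f2 x) (xs : X) :
    (¬ ∃ x : X, f1 x < f1 xs ∧ f2 x < f2 xs) ↔
    ∃ w : ℝ, w ∈ Set.Ioo (0 : ℝ) 1 ∧
      ∀ x : X, max (w * f1 xs) ((1 - w) * f2 xs) ≤ max (w * f1 x) ((1 - w) * f2 x) := by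
  constructor
  · intro hpar
    have p1 := h1 xs
    have p2 := h2 xs
    have hs : 0 < f1 xs + f2 xs := by positivity
    refine ⟨f2 xs / (f1 xs + f2 xs), ⟨by positivity, by
      rw [div_lt_one hs]; linarith [h1 xs]⟩, ?_⟩
    set w : ℝ := f2 xs / (f1 xs + f2 xs) with hw
    have heq : w * f1 xs = (1 - w) * f2 xs := by
      rw [hw, div_mul_eq_mul_div, one_sub_div hs.ne', div_mul_eq_mul_div]; ring
    intro x
    by_contra hlt
    push_neg at hlt
    have hw0 : 0 < w := by rw [hw]; positivity
    have hw1 : w < 1 := by rw [hw, div_lt_one hs]; linarith [h1 xs]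
    have hmx : max (w * f1 xs) ((1 - w) * f2 xs) = w * f1 xs := by
      rw [← heq, max_self]
    have hA : w * f1 x < w * f1 xs :=
      lt_of_le_of_lt (le_max_left _ _) (hmx ▸ hlt)
    have hB : (1 - w) * f2 x < (1 - w) * f2 xs := by
      calc (1 - w) * f2 x ≤ _ := le_max_right (w * f1 x) _
        _ < max (w * f1 xs) ((1 - w) * f2 xs) := hlt
        _ = (1 - w) * f2 xs := by rw [hmx, heq]
    exact hpar ⟨x, lt_of_mul_lt_mul_left hA hw0.le,
      lt_of_mul_lt_mul_left hB (by linarith)⟩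
  · rintro ⟨w, ⟨hw0, hw1⟩, hmin⟩ ⟨x, hx1, hx2⟩
    have h := hmin x
    have hA : w * f1 x < w * f1 xs := by nlinarith
    have hB : (1 - w) * f2 x < (1 - w) * f2 xs := by nlinarith
    have : max (w * f1 x) ((1 - w) * f2 x) < max (w * f1 xs) ((1 - w) * f2 xs) :=
      max_lt (lt_of_lt_of_le hA (le_max_left _ _)) (lt_of_lt_of_le hB (le_max_right _ _))
    linarith
end

section
/- If x* is a weak Pareto minimum of bounded-below objectives (f_1, ..., f_r) on X and β_i* < inf_{x∈X} f_i(x) for each i, then x* minimizes max_i w_i (f_i(x) − β_i*) over X for the weights w_i = (f_i(x*) − β_i*)^{-1} / ∑_j (f_j(x*) − β_j*)^{-1}, which are positive and sum to 1. -/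
/-- If `xs` is a weak Pareto minimum of `(f 1,...,f r)` on `X`, with utopian values
`β i < f i x` for all `x ∈ X` and all `i`, then `xs` minimizes the weighted Chebyshev
function `max_i w i * (f i x - β i)` over `X` for the weights
`w i = (f i xs - β i)⁻¹ / ∑ j, (f j xs - β j)⁻¹`, which are positive and sum to 1. -/
theorem weak_pareto_chebyshev_utopia {X : Type*} [Nonempty X] {r : ℕ} (hr : 0 < r)
    (f : Fin r → X → ℝ) (β : Fin r → ℝ) (hβ : ∀ i (x : X), β i < f i x)
    (xs : X) (hpar : ¬ ∃ x : X, ∀ i, f i x < f i xs)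
    (w : Fin r → ℝ)
    (hw : ∀ i, w i = (f i xs - β i)⁻¹ / ∑ j, (f j xs - β j)⁻¹) :
    (∀ i, 0 < w i) ∧ (∑ i, w i = 1) ∧
    ∀ x : X,
      (Finset.univ.sup' (Finset.univ_nonempty_iff.mpr (Fin.pos_iff_nonempty.mp hr))
        fun i => w i * (f i xs - β i)) ≤
      Finset.univ.sup' (Finset.univ_nonempty_iff.mpr (Fin.pos_iff_nonempty.mp hr))
        fun i => w i * (f i x - β i) := by
  have hne : (Finset.univ : Finset (Fin r)).Nonempty :=
    Finset.univ_nonempty_iff.mpr (Fin.pos_iff_nonempty.mp hr)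
  have hpos : ∀ i, (0:ℝ) < f i xs - β i := fun i => sub_pos.mpr (hβ i xs)
  set S := ∑ j, (f j xs - β j)⁻¹ with hSdef
  have hS : 0 < S :=
    Finset.sum_pos (fun j _ => inv_pos.mpr (hpos j)) hne
  have hwpos : ∀ i, 0 < w i := fun i => by
    rw [hw i]; exact div_pos (inv_pos.mpr (hpos i)) hS
  have hconst : ∀ i, w i * (f i xs - β i) = S⁻¹ := fun i => by
    rw [hw i]
    field_simp
    exact div_self (hpos i).ne'
  refine ⟨hwpos, ?_, ?_⟩
  · have : ∑ i, w i = (∑ i, (f i xs - β i)⁻¹) / S := by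
      rw [Finset.sum_div]; exact Finset.sum_congr rfl fun i _ => hw i
    rw [this, ← hSdef, div_self hS.ne']
  · intro x
    push_neg at hpar
    obtain ⟨i, hi⟩ := hpar x
    have h1 : (Finset.univ.sup' hne fun i => w i * (f i xs - β i)) ≤ S⁻¹ :=
      Finset.sup'_le _ _ fun j _ => (hconst j).le
    refine h1.trans ?_
    have h2 : S⁻¹ ≤ w i * (f i x - β i) := by
      rw [← hconst i]
      exact mul_le_mul_of_nonneg_left (by linarith) (hwpos i).le
    exact h2.trans (Finset.le_sup' (fun j => w j * (f j x - β j)) (Finset.mem_univ i))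
end
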